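/- For k ≥ 1, the graph H^(k) = I_{k+2} ∨ (K_{k+3} ∪ K_{2k}) on 4k+5 vertices is k½-extendable. -/

import Mathlib

open SimpleGraph

/-- `G` has a matching with exactly `k` edges. -/
def HasMatchingOfSize {V : Type*} (G : SimpleGraph V) (k : ℕ) : Prop :=
  ∃ M : G.Subgraph, M.IsMatching ∧ M.edgeSet.ncard = k

/-- `G` is `k`-extendable: connected, has a matching of size `k`, and every
matching of size `k` extends to a perfect matching. -/
def Extendable {V : Type*} (G : SimpleGraph V) (k : ℕ) : Prop :=
  G.Connected ∧ HasMatchingOfSize G k ∧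
    ∀ M : G.Subgraph, M.IsMatching → M.edgeSet.ncard = k →
      ∃ M' : G.Subgraph, M ≤ M' ∧ M'.IsPerfectMatching

/-- `G` is `n`-factor-critical: deleting any `n` vertices leaves a graph with
a perfect matching. -/
def FactorCritical {V : Type*} [Fintype V] (G : SimpleGraph V) (n : ℕ) : Prop :=
  ∀ S : Finset V, S.card = n →
    ∃ M : (G.induce ((↑S : Set V)ᶜ)).Subgraph, M.IsPerfectMatching

/-- `G` is `k½`-extendable: for every vertex `v`, `G - v` has a matching of
size `k`, and every matching of size `k` in `G - v` extends to a perfect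
matching of `G - v`. -/
def HalfExtendable {V : Type*} (G : SimpleGraph V) (k : ℕ) : Prop :=
  ∀ v : V,
    HasMatchingOfSize (G.induce ({v}ᶜ : Set V)) k ∧
    ∀ M : (G.induce ({v}ᶜ : Set V)).Subgraph, M.IsMatching → M.edgeSet.ncard = k →
      ∃ M' : (G.induce ({v}ᶜ : Set V)).Subgraph, M ≤ M' ∧ M'.IsPerfectMatching

/-- Vertex type of `I_{k+2} ∨ (K_{k+3} ∪ K_{2k})`. -/
abbrev HkV (k : ℕ) := Fin (k + 2) ⊕ (Fin (k + 3) ⊕ Fin (2 * k))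

/-- The graph `H^(k) = I_{k+2} ∨ (K_{k+3} ∪ K_{2k})`: all edges between the
independent set and the two cliques, plus complete graphs on `Fin (k+3)` and `Fin (2k)`. -/
def Hk (k : ℕ) : SimpleGraph (HkV k) :=
  SimpleGraph.fromRel (fun x y =>
    x.isLeft ≠ y.isLeft ∨
    (∃ a b, x = Sum.inr (Sum.inl a) ∧ y = Sum.inr (Sum.inl b)) ∨
    (∃ a b, x = Sum.inr (Sum.inr a) ∧ y = Sum.inr (Sum.inr b)))


section Helpers
open Finset
variable {W : Type*} [Fintype W] [DecidableEq W] {G : SimpleGraph W}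


variable {W : Type*} [Fintype W] [DecidableEq W] {G : SimpleGraph W}

lemma matching_two_mul (M : G.Subgraph) (h : M.IsMatching) :
    M.verts.ncard = 2 * M.edgeSet.ncard := by
  classical
  have hfin : M.verts.Finite := Set.toFinite _
  have hefin : M.edgeSet.Finite := Set.toFinite _
  set f : W → Sym2 W := fun v => if hv : v ∈ M.verts then ((h.toEdge ⟨v, hv⟩ : M.edgeSet) : Sym2 W) else s(v, v) with hf
  have hmapsto : ∀ v ∈ M.verts.toFinset, f v ∈ M.edgeSet.toFinset := by
    intro v hv
    rw [Set.mem_toFinset] at hv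
    simp only [hf, dif_pos hv, Set.mem_toFinset]
    exact (h.toEdge ⟨v, hv⟩).2
  have key := Finset.card_eq_sum_card_fiberwise hmapsto
  have hfib : ∀ e ∈ M.edgeSet.toFinset, (M.verts.toFinset.filter (fun v => f v = e)).card = 2 := by
    intro e he
    rw [Set.mem_toFinset] at he
    induction e with
    | h x y =>
      have hadj : M.Adj x y := SimpleGraph.Subgraph.mem_edgeSet.mp he
      have hxy : x ≠ y := hadj.ne
      have hx : x ∈ M.verts := M.edge_vert hadj
      have hy : y ∈ M.verts := M.edge_vert hadj.symm
      have : M.verts.toFinset.filter (fun v => f v = s(x,y)) = {x, y} := by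
        ext v
        simp only [Finset.mem_filter, Set.mem_toFinset, Finset.mem_insert, Finset.mem_singleton]
        constructor
        · rintro ⟨hv, hfv⟩
          obtain ⟨w, hw⟩ := h hv
          have : f v = s(v, w) := by
            simp only [hf, dif_pos hv]
            rw [h.toEdge_eq_of_adj hw.1]
          rw [this] at hfv
          rw [Sym2.eq_iff] at hfv
          tauto
        · rintro (rfl | rfl)
          · refine ⟨hx, ?_⟩
            simp only [hf, dif_pos hx]
            rw [h.toEdge_eq_of_adj hadj]
          · refine ⟨hy, ?_⟩
            simp only [hf, dif_pos hy]
            rw [h.toEdge_eq_of_adj hadj.symm]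
            simp [Sym2.eq_swap]
      rw [this]
      rw [Finset.card_insert_of_notMem (by simp [hxy]), Finset.card_singleton]
  rw [Finset.sum_congr rfl hfib, Finset.sum_const, smul_eq_mul] at key
  rw [Set.ncard_eq_toFinset_card', Set.ncard_eq_toFinset_card', key, mul_comm]

lemma matching_of_finsets (s t : Finset W) (hd : Disjoint s t) (hcard : s.card = t.card)
    (hadj : ∀ a ∈ s, ∀ b ∈ t, G.Adj a b) :
    ∃ N : G.Subgraph, N.IsMatching ∧ N.verts = ↑s ∪ ↑t := by
  classical
  have e : (s : Finset W) ≃ t := Finset.equivOfCardEq hcard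
  have e' : ((s : Set W)) ≃ ((t : Set W)) :=
    (Equiv.subtypeEquivRight (fun x => by simp)).trans
      (e.trans (Equiv.subtypeEquivRight (fun x => by simp)))
  have hdisj : Disjoint (s : Set W) (t : Set W) := Finset.disjoint_coe.mpr hd
  obtain ⟨N, hv, hm⟩ := SimpleGraph.Subgraph.IsMatching.exists_of_disjoint_sets_of_equiv hdisj e'
    (fun v => hadj v (by simpa using v.2) (e' v) (by simpa using (e' v).2))
  exact ⟨N, hm, hv⟩

lemma matching_of_clique (s : Finset W) (hev : Even s.card)
    (hadj : ∀ a ∈ s, ∀ b ∈ s, a ≠ b → G.Adj a b) :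
    ∃ N : G.Subgraph, N.IsMatching ∧ N.verts = ↑s := by
  classical
  obtain ⟨m, hm⟩ := hev
  obtain ⟨t, hts, htcard⟩ := Finset.exists_subset_card_eq (show m ≤ s.card by omega)
  have hd : Disjoint t (s \ t) := Finset.disjoint_sdiff
  have hcard : t.card = (s \ t).card := by
    rw [Finset.card_sdiff_of_subset hts]; omega
  obtain ⟨N, hmN, hvN⟩ := matching_of_finsets t (s \ t) hd hcard
    (fun a ha b hb => hadj a (hts ha) b (Finset.sdiff_subset hb)
      (fun h => (Finset.mem_sdiff.mp hb).2 (h ▸ ha)))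
  refine ⟨N, hmN, ?_⟩
  rw [hvN, ← Finset.coe_union, Finset.union_sdiff_of_subset hts]

lemma cover_matching (A B C : Finset W)
    (hAB : Disjoint A B) (hAC : Disjoint A C) (hBC : Disjoint B C)
    (adjAB : ∀ a ∈ A, ∀ b ∈ B, G.Adj a b) (adjAC : ∀ a ∈ A, ∀ c ∈ C, G.Adj a c)
    (adjB : ∀ a ∈ B, ∀ b ∈ B, a ≠ b → G.Adj a b)
    (adjC : ∀ a ∈ C, ∀ b ∈ C, a ≠ b → G.Adj a b)
    (x y : ℕ) (hA : A.card = x + y) (hxB : x ≤ B.card) (hyC : y ≤ C.card)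
    (hevB : Even (B.card - x)) (hevC : Even (C.card - y)) :
    ∃ N : G.Subgraph, N.IsMatching ∧ N.verts = ↑A ∪ ↑B ∪ ↑C := by
  classical
  obtain ⟨A1, hA1sub, hA1card⟩ := Finset.exists_subset_card_eq (show x ≤ A.card by omega)
  obtain ⟨B1, hB1sub, hB1card⟩ := Finset.exists_subset_card_eq hxB
  obtain ⟨C1, hC1sub, hC1card⟩ := Finset.exists_subset_card_eq hyC
  set A2 := A \ A1 with hA2
  have hA2card : A2.card = y := by rw [hA2, Finset.card_sdiff_of_subset hA1sub]; omega
  -- N1 : A1 – B1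
  obtain ⟨N1, hm1, hv1⟩ := matching_of_finsets A1 B1
    (Finset.disjoint_of_subset_left hA1sub (Finset.disjoint_of_subset_right hB1sub hAB))
    (by omega)
    (fun a ha b hb => adjAB a (hA1sub ha) b (hB1sub hb))
  -- N2 : A2 – C1
  obtain ⟨N2, hm2, hv2⟩ := matching_of_finsets A2 C1
    (Finset.disjoint_of_subset_left Finset.sdiff_subset
      (Finset.disjoint_of_subset_right hC1sub hAC))
    (by omega)
    (fun a ha b hb => adjAC a (Finset.sdiff_subset ha) b (hC1sub hb))
  -- N3 : pair up B \ B1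
  obtain ⟨N3, hm3, hv3⟩ := matching_of_clique (B \ B1)
    (by rwa [Finset.card_sdiff_of_subset hB1sub, hB1card])
    (fun a ha b hb hne => adjB a (Finset.sdiff_subset ha) b (Finset.sdiff_subset hb) hne)
  -- N4 : pair up C \ C1
  obtain ⟨N4, hm4, hv4⟩ := matching_of_clique (C \ C1)
    (by rwa [Finset.card_sdiff_of_subset hC1sub, hC1card])
    (fun a ha b hb hne => adjC a (Finset.sdiff_subset ha) b (Finset.sdiff_subset hb) hne)
  -- disjointness of the four vertex sets
  have key : ∀ {P Q : Finset W}, Disjoint P Q → Disjoint (P : Set W) (Q : Set W) :=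
    fun h => Finset.disjoint_coe.mpr h
  have dA1B1_A2C1 : Disjoint N1.verts N2.verts := by
    rw [hv1, hv2]
    refine Set.disjoint_union_left.mpr ⟨Set.disjoint_union_right.mpr ⟨?_, ?_⟩,
      Set.disjoint_union_right.mpr ⟨?_, ?_⟩⟩
    · exact key (Finset.disjoint_sdiff)
    · exact key (Finset.disjoint_of_subset_left hA1sub (Finset.disjoint_of_subset_right hC1sub hAC))
    · exact key (Finset.disjoint_of_subset_left hB1sub
        (Finset.disjoint_of_subset_right Finset.sdiff_subset hAB.symm))
    · exact key (Finset.disjoint_of_subset_left hB1sub (Finset.disjoint_of_subset_right hC1sub hBC))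
  have dN3 : Disjoint (N1.verts ∪ N2.verts) N3.verts := by
    rw [hv1, hv2, hv3]
    refine Set.disjoint_union_left.mpr ⟨Set.disjoint_union_left.mpr ⟨?_, ?_⟩,
      Set.disjoint_union_left.mpr ⟨?_, ?_⟩⟩
    · exact key (Finset.disjoint_of_subset_left hA1sub
        (Finset.disjoint_of_subset_right Finset.sdiff_subset hAB))
    · exact key (Finset.sdiff_disjoint.symm)
    · exact key (Finset.disjoint_of_subset_left Finset.sdiff_subset
        (Finset.disjoint_of_subset_right Finset.sdiff_subset hAB))
    · exact key (Finset.disjoint_of_subset_left hC1sub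
        (Finset.disjoint_of_subset_right Finset.sdiff_subset hBC.symm))
  have dN4 : Disjoint (N1.verts ∪ N2.verts ∪ N3.verts) N4.verts := by
    rw [hv1, hv2, hv3, hv4]
    refine Set.disjoint_union_left.mpr ⟨Set.disjoint_union_left.mpr
      ⟨Set.disjoint_union_left.mpr ⟨?_, ?_⟩, Set.disjoint_union_left.mpr ⟨?_, ?_⟩⟩, ?_⟩
    · exact key (Finset.disjoint_of_subset_left hA1sub
        (Finset.disjoint_of_subset_right Finset.sdiff_subset hAC))
    · exact key (Finset.disjoint_of_subset_left hB1sub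
        (Finset.disjoint_of_subset_right Finset.sdiff_subset hBC))
    · exact key (Finset.disjoint_of_subset_left Finset.sdiff_subset
        (Finset.disjoint_of_subset_right Finset.sdiff_subset hAC))
    · exact key (Finset.sdiff_disjoint.symm)
    · exact key (Finset.disjoint_of_subset_left Finset.sdiff_subset
        (Finset.disjoint_of_subset_right Finset.sdiff_subset hBC))
  have hm12 : (N1 ⊔ N2).IsMatching := hm1.sup hm2
    (by rw [hm1.support_eq_verts, hm2.support_eq_verts]; exact dA1B1_A2C1)
  have hv12 : (N1 ⊔ N2).verts = N1.verts ∪ N2.verts := rfl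
  have hm123 : (N1 ⊔ N2 ⊔ N3).IsMatching := hm12.sup hm3
    (by rw [hm12.support_eq_verts, hm3.support_eq_verts, hv12]; exact dN3)
  have hm1234 : (N1 ⊔ N2 ⊔ N3 ⊔ N4).IsMatching := hm123.sup hm4
    (by rw [hm123.support_eq_verts, hm4.support_eq_verts]; exact dN4)
  refine ⟨N1 ⊔ N2 ⊔ N3 ⊔ N4, hm1234, ?_⟩
  show N1.verts ∪ N2.verts ∪ N3.verts ∪ N4.verts = _
  rw [hv1, hv2, hv3, hv4]
  ext z
  simp only [Set.mem_union, Finset.mem_coe, Finset.coe_sdiff, Set.mem_diff, hA2,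
    Finset.mem_sdiff]
  constructor
  · rintro ((((h|h)|(⟨h,-⟩|h))|⟨h,-⟩)|⟨h,-⟩)
    · exact Or.inl (Or.inl (hA1sub h))
    · exact Or.inl (Or.inr (hB1sub h))
    · exact Or.inl (Or.inl h)
    · exact Or.inr (hC1sub h)
    · exact Or.inl (Or.inr h)
    · exact Or.inr h
  · rintro ((h|h)|h)
    · by_cases hz : z ∈ A1
      · exact Or.inl (Or.inl (Or.inl (Or.inl hz)))
      · exact Or.inl (Or.inl (Or.inr (Or.inl ⟨h, hz⟩)))
    · by_cases hz : z ∈ B1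
      · exact Or.inl (Or.inl (Or.inl (Or.inr hz)))
      · exact Or.inl (Or.inr ⟨h, hz⟩)
    · by_cases hz : z ∈ C1
      · exact Or.inl (Or.inl (Or.inr (Or.inr hz)))
      · exact Or.inr ⟨h, hz⟩


/-- counting in the complement-of-a-vertex subtype -/
lemma filter_compl_card {V : Type*} [Fintype V] [DecidableEq V] (v : V)
    (P : V → Prop) [DecidablePred P] :
    ((Finset.univ : Finset (↥({v}ᶜ : Set V))).filter (fun x : ↥({v}ᶜ : Set V) => P ↑x)).card
      + (if P v then 1 else 0) = ((Finset.univ : Finset V).filter P).card := by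
  classical
  have hmap : ((Finset.univ : Finset (↥({v}ᶜ : Set V))).filter (fun x : ↥({v}ᶜ : Set V) => P ↑x)).map
      (Function.Embedding.subtype _) = (Finset.univ.filter P).erase v := by
    ext z
    simp only [Finset.mem_map, Finset.mem_filter, Finset.mem_univ, true_and,
      Function.Embedding.coe_subtype, Finset.mem_erase]
    constructor
    · rintro ⟨⟨w, hw⟩, hPw, rfl⟩
      simp only [Set.mem_compl_iff, Set.mem_singleton_iff] at hw
      exact ⟨hw, hPw⟩
    · rintro ⟨hz, hP⟩
      exact ⟨⟨z, by simp [hz]⟩, hP, rfl⟩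
  have := congrArg Finset.card hmap
  rw [Finset.card_map] at this
  rw [this]
  by_cases hv : P v
  · rw [if_pos hv, Finset.card_erase_of_mem (by simp [hv])]
    have : v ∈ Finset.univ.filter P := by simp [hv]
    have h1 : 1 ≤ (Finset.univ.filter P).card := Finset.card_pos.mpr ⟨v, this⟩
    omega
  · rw [if_neg hv, Finset.erase_eq_of_notMem (by simp [hv])]
    omega

end Helpers

namespace HkProof

/-- classifier of the three parts of `HkV k` -/
def pt {k : ℕ} : HkV k → ℕ := Sum.elim (fun _ => 0) (Sum.elim (fun _ => 1) (fun _ => 2))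

lemma pt_lt3 {k : ℕ} (x : HkV k) : pt x < 3 := by
  rcases x with a | (b | c) <;> simp [pt]

lemma hk_adj_of_pt_ne_zero {k : ℕ} {x y : HkV k} (hx : pt x = 0) (hy : pt y ≠ 0) :
    (Hk k).Adj x y := by
  rcases x with a | (b | c) <;> rcases y with a' | (b' | c') <;>
    simp_all [pt, Hk, SimpleGraph.fromRel_adj]

lemma hk_adj_of_pt_one {k : ℕ} {x y : HkV k} (hx : pt x = 1) (hy : pt y = 1) (hne : x ≠ y) :
    (Hk k).Adj x y := by
  rcases x with a | (b | c) <;> rcases y with a' | (b' | c') <;>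
    simp_all [pt, Hk, SimpleGraph.fromRel_adj]

lemma hk_adj_of_pt_two {k : ℕ} {x y : HkV k} (hx : pt x = 2) (hy : pt y = 2) (hne : x ≠ y) :
    (Hk k).Adj x y := by
  rcases x with a | (b | c) <;> rcases y with a' | (b' | c') <;>
    simp_all [pt, Hk, SimpleGraph.fromRel_adj]

lemma hk_not_adj_of_pt_zero {k : ℕ} {x y : HkV k} (hx : pt x = 0) (hy : pt y = 0) :
    ¬ (Hk k).Adj x y := by
  rcases x with a | (b | c) <;> rcases y with a' | (b' | c') <;>
    simp_all [pt, Hk, SimpleGraph.fromRel_adj]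

lemma card_pt_zero (k : ℕ) :
    ((Finset.univ : Finset (HkV k)).filter (fun y => pt y = 0)).card = k + 2 := by
  have : (Finset.univ : Finset (HkV k)).filter (fun y => pt y = 0)
      = (Finset.univ : Finset (Fin (k+2))).map ⟨Sum.inl, Sum.inl_injective⟩ := by
    ext y
    rcases y with a | (b | c) <;> simp [Finset.mem_filter] <;> simp [pt, Function.Embedding.coeFn_mk]
  rw [this, Finset.card_map, Finset.card_univ, Fintype.card_fin]

lemma card_pt_one (k : ℕ) :
    ((Finset.univ : Finset (HkV k)).filter (fun y => pt y = 1)).card = k + 3 := by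
  have : (Finset.univ : Finset (HkV k)).filter (fun y => pt y = 1)
      = (Finset.univ : Finset (Fin (k+3))).map
          ⟨fun a => Sum.inr (Sum.inl a), fun a b h => by simpa using h⟩ := by
    ext y
    rcases y with a | (b | c)
    · simp [Finset.mem_filter] <;> simp [pt]
    · simp [Finset.mem_filter] <;> simp [pt]
      exact ⟨b, rfl⟩
    · simp [Finset.mem_filter] <;> simp [pt]
      exact fun x h => by cases h
  rw [this, Finset.card_map, Finset.card_univ, Fintype.card_fin]

lemma card_pt_two (k : ℕ) :
    ((Finset.univ : Finset (HkV k)).filter (fun y => pt y = 2)).card = 2 * k := by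
  have : (Finset.univ : Finset (HkV k)).filter (fun y => pt y = 2)
      = (Finset.univ : Finset (Fin (2*k))).map
          ⟨fun a => Sum.inr (Sum.inr a), fun a b h => by simpa using h⟩ := by
    ext y
    rcases y with a | (b | c)
    · simp [Finset.mem_filter] <;> simp [pt]
    · simp [Finset.mem_filter] <;> simp [pt]
      exact fun x h => by cases h
    · simp [Finset.mem_filter] <;> simp [pt]
      exact ⟨c, rfl⟩
  rw [this, Finset.card_map, Finset.card_univ, Fintype.card_fin]

lemma filter_three_split {X : Type*} (f : X → ℕ) (hf : ∀ x, f x < 3) (s : Finset X) :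
    (s.filter (fun x => f x = 0)).card + (s.filter (fun x => f x = 1)).card
      + (s.filter (fun x => f x = 2)).card = s.card := by
  classical
  have h1 := Finset.card_filter_add_card_filter_not (s := s) (p := fun x => f x = 0)
  have h2 := Finset.card_filter_add_card_filter_not
    (s := s.filter (fun x => ¬ f x = 0)) (p := fun x => f x = 1)
  have e1 : (s.filter (fun x => ¬ f x = 0)).filter (fun x => f x = 1)
      = s.filter (fun x => f x = 1) := by
    ext z
    simp only [Finset.mem_filter]
    constructor
    · rintro ⟨⟨hz, -⟩, h⟩; exact ⟨hz, h⟩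
    · rintro ⟨hz, h⟩; exact ⟨⟨hz, by omega⟩, h⟩
  have e2 : (s.filter (fun x => ¬ f x = 0)).filter (fun x => ¬ f x = 1)
      = s.filter (fun x => f x = 2) := by
    ext z
    have := hf z
    simp only [Finset.mem_filter]
    constructor
    · rintro ⟨⟨hz, h0⟩, h⟩; exact ⟨hz, by omega⟩
    · rintro ⟨hz, h⟩; exact ⟨⟨hz, by omega⟩, by omega⟩
  rw [e1, e2] at h2
  omega

end HkProof

set_option maxHeartbeats 2000000 in
/-- for `k ≥ 1`, `H^(k)` is `k½`-extendable. -/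
theorem stmt11 (k : ℕ) (hk : 1 ≤ k) : HalfExtendable (Hk k) k := by
  classical
  intro v
  set S : Set (HkV k) := {v}ᶜ with hS
  have hadjG : ∀ x y : ↥S, ((Hk k).induce S).Adj x y ↔ (Hk k).Adj ↑x ↑y := fun x y => Iff.rfl
  set A' := (Finset.univ : Finset ↥S).filter (fun x : ↥S => HkProof.pt (↑x : HkV k) = 0) with hA'def
  set B' := (Finset.univ : Finset ↥S).filter (fun x : ↥S => HkProof.pt (↑x : HkV k) = 1) with hB'def
  set C' := (Finset.univ : Finset ↥S).filter (fun x : ↥S => HkProof.pt (↑x : HkV k) = 2) with hC'def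
  have hA' : A'.card + (if HkProof.pt v = 0 then 1 else 0) = k + 2 := by
    have h := filter_compl_card v (fun y : HkV k => HkProof.pt y = 0)
    rw [HkProof.card_pt_zero k] at h
    exact h
  have hB' : B'.card + (if HkProof.pt v = 1 then 1 else 0) = k + 3 := by
    have h := filter_compl_card v (fun y : HkV k => HkProof.pt y = 1)
    rw [HkProof.card_pt_one k] at h
    exact h
  have hC' : C'.card + (if HkProof.pt v = 2 then 1 else 0) = 2 * k := by
    have h := filter_compl_card v (fun y : HkV k => HkProof.pt y = 2)
    rw [HkProof.card_pt_two k] at h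
    exact h
  have hifA : (if HkProof.pt v = 0 then 1 else 0) ≤ 1 := by split_ifs <;> omega
  have hifB : (if HkProof.pt v = 1 then 1 else 0) ≤ 1 := by split_ifs <;> omega
  have hifC : (if HkProof.pt v = 2 then 1 else 0) ≤ 1 := by split_ifs <;> omega
  have hifsum : (if HkProof.pt v = 0 then 1 else 0) + (if HkProof.pt v = 1 then 1 else 0)
      + (if HkProof.pt v = 2 then 1 else 0) = 1 := by
    have h3 := HkProof.pt_lt3 v
    split_ifs <;> omega
  have hABd : Disjoint A' B' := by
    rw [Finset.disjoint_left]
    intro z hz hz'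
    rw [hA'def, Finset.mem_filter] at hz
    rw [hB'def, Finset.mem_filter] at hz'
    omega
  have hACd : Disjoint A' C' := by
    rw [Finset.disjoint_left]
    intro z hz hz'
    rw [hA'def, Finset.mem_filter] at hz
    rw [hC'def, Finset.mem_filter] at hz'
    omega
  have hBCd : Disjoint B' C' := by
    rw [Finset.disjoint_left]
    intro z hz hz'
    rw [hB'def, Finset.mem_filter] at hz
    rw [hC'def, Finset.mem_filter] at hz'
    omega
  constructor
  · -- `HasMatchingOfSize`
    obtain ⟨s, hsub, hscard⟩ := Finset.exists_subset_card_eq (show k ≤ A'.card by omega)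
    obtain ⟨t, htub, htcard⟩ := Finset.exists_subset_card_eq (show k ≤ B'.card by omega)
    obtain ⟨N, hmN, hvN⟩ := matching_of_finsets s t
      (Finset.disjoint_of_subset_left hsub (Finset.disjoint_of_subset_right htub hABd))
      (by omega)
      (fun a ha b hb => by
        rw [hadjG]
        refine HkProof.hk_adj_of_pt_ne_zero ?_ ?_
        · exact (Finset.mem_filter.mp (hsub ha)).2
        · have := (Finset.mem_filter.mp (htub hb)).2
          omega)
    refine ⟨N, hmN, ?_⟩
    have hv2 : N.verts.ncard = 2 * k := by
      rw [hvN, Set.ncard_union_eq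
        (Finset.disjoint_coe.mpr
          (Finset.disjoint_of_subset_left hsub (Finset.disjoint_of_subset_right htub hABd)))
        (Set.toFinite _) (Set.toFinite _), Set.ncard_coe_finset, Set.ncard_coe_finset,
        hscard, htcard]
      omega
    have := matching_two_mul N hmN
    omega
  · -- extension property
    intro M hM hMcard
    have hverts2k : M.verts.ncard = 2 * k := by
      rw [matching_two_mul M hM, hMcard]
    -- counts of covered vertices in each part
    set a := (A'.filter (fun x => x ∈ M.verts)).card with hadef
    set b := (B'.filter (fun x => x ∈ M.verts)).card with hbdef
    set c := (C'.filter (fun x => x ∈ M.verts)).card with hcdef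
    set α := (A'.filter (fun x => x ∉ M.verts)).card with hαdef
    set β := (B'.filter (fun x => x ∉ M.verts)).card with hβdef
    set γ := (C'.filter (fun x => x ∉ M.verts)).card with hγdef
    have haα : a + α = A'.card := by
      rw [hadef, hαdef]
      exact Finset.card_filter_add_card_filter_not (p := fun x => x ∈ M.verts)
    have hbβ : b + β = B'.card := by
      rw [hbdef, hβdef]
      exact Finset.card_filter_add_card_filter_not (p := fun x => x ∈ M.verts)
    have hcγ : c + γ = C'.card := by
      rw [hcdef, hγdef]
      exact Finset.card_filter_add_card_filter_not (p := fun x => x ∈ M.verts)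
    -- a + b + c = 2k
    set s0 := (Finset.univ : Finset ↥S).filter (fun x => x ∈ M.verts) with hs0def
    have hs0card : s0.card = 2 * k := by
      have : s0 = M.verts.toFinset := by
        ext z
        simp [hs0def, Set.mem_toFinset]
      rw [this, ← Set.ncard_eq_toFinset_card', hverts2k]
    have hcomm0 : A'.filter (fun x => x ∈ M.verts)
        = s0.filter (fun x : ↥S => HkProof.pt (↑x : HkV k) = 0) := by
      ext z
      simp only [hA'def, hs0def, Finset.mem_filter]
      tauto
    have hcomm1 : B'.filter (fun x => x ∈ M.verts)
        = s0.filter (fun x : ↥S => HkProof.pt (↑x : HkV k) = 1) := by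
      ext z
      simp only [hB'def, hs0def, Finset.mem_filter]
      tauto
    have hcomm2 : C'.filter (fun x => x ∈ M.verts)
        = s0.filter (fun x : ↥S => HkProof.pt (↑x : HkV k) = 2) := by
      ext z
      simp only [hC'def, hs0def, Finset.mem_filter]
      tauto
    have habc : a + b + c = 2 * k := by
      have := HkProof.filter_three_split (fun x : ↥S => HkProof.pt (↑x : HkV k))
        (fun x => HkProof.pt_lt3 _) s0
      rw [hadef, hbdef, hcdef, hcomm0, hcomm1, hcomm2]
      omega
    -- a ≤ k via independence of the A part
    have hak : a ≤ k := by
      have hTcard : (s0.filter (fun x : ↥S => ¬ HkProof.pt (↑x : HkV k) = 0)).card = b + c := by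
        have hsplit : s0.filter (fun x : ↥S => ¬ HkProof.pt (↑x : HkV k) = 0)
            = (s0.filter (fun x : ↥S => HkProof.pt (↑x : HkV k) = 1))
              ∪ (s0.filter (fun x : ↥S => HkProof.pt (↑x : HkV k) = 2)) := by
          ext z
          have h3 := HkProof.pt_lt3 (↑z : HkV k)
          simp only [Finset.mem_filter, Finset.mem_union]
          constructor
          · rintro ⟨hz, h0⟩
            have : HkProof.pt (↑z : HkV k) = 1 ∨ HkProof.pt (↑z : HkV k) = 2 := by omega
            rcases this with h | h
            · exact Or.inl ⟨hz, h⟩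
            · exact Or.inr ⟨hz, h⟩
          · rintro (⟨hz, h⟩ | ⟨hz, h⟩) <;> exact ⟨hz, by omega⟩
        rw [hsplit, Finset.card_union_of_disjoint (by
          rw [Finset.disjoint_left]
          intro z hz hz'
          rw [Finset.mem_filter] at hz hz'
          omega), hbdef, hcdef, hcomm1, hcomm2]
      have hinj : a ≤ (s0.filter (fun x : ↥S => ¬ HkProof.pt (↑x : HkV k) = 0)).card := by
        rw [hadef, hcomm0]
        apply Finset.card_le_card_of_injOn
          (fun x => if hx : x ∈ M.verts then (hM hx).choose else x)
        · intro x hx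
          rw [Finset.mem_coe, Finset.mem_filter] at hx
          obtain ⟨hx0, hpt⟩ := hx
          rw [hs0def, Finset.mem_filter] at hx0
          have hxm : x ∈ M.verts := hx0.2
          simp only [dif_pos hxm]
          have hadj : M.Adj x (hM hxm).choose := ((hM hxm).choose_spec).1
          have hwm : (hM hxm).choose ∈ M.verts := M.edge_vert (M.adj_symm hadj)
          rw [Finset.mem_coe, Finset.mem_filter, hs0def, Finset.mem_filter]
          refine ⟨⟨Finset.mem_univ _, hwm⟩, ?_⟩
          intro hw0
          exact HkProof.hk_not_adj_of_pt_zero hpt hw0 ((hadjG _ _).mp (M.adj_sub hadj))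
        · intro x1 hx1 x2 hx2 heq
          rw [Finset.coe_filter, Set.mem_setOf_eq] at hx1 hx2
          have hm1 : x1 ∈ M.verts := by
            have := hx1.1; rw [hs0def, Finset.mem_filter] at this; exact this.2
          have hm2 : x2 ∈ M.verts := by
            have := hx2.1; rw [hs0def, Finset.mem_filter] at this; exact this.2
          simp only [dif_pos hm1, dif_pos hm2] at heq
          have h1 : M.Adj x1 (hM hm1).choose := ((hM hm1).choose_spec).1
          have h2 : M.Adj x2 (hM hm2).choose := ((hM hm2).choose_spec).1
          rw [heq] at h1
          have hwm : (hM hm2).choose ∈ M.verts := M.edge_vert (M.adj_symm h2)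
          exact ((hM hwm).unique (M.adj_symm h1) (M.adj_symm h2))
      omega
    -- choose the size of the A''–B'' part of the new matching
    obtain ⟨xx, hx1, hx2, hx3, hx4, hx5⟩ :
        ∃ x, x ≤ α ∧ x ≤ β ∧ α - x ≤ γ ∧ (β - x) % 2 = 0 ∧ (γ - (α - x)) % 2 = 0 := by
      by_cases hba : β ≤ α
      · exact ⟨β, hba, le_rfl, by omega, by omega, by omega⟩
      · by_cases hpar : (α + β) % 2 = 0
        · exact ⟨α, le_rfl, by omega, by omega, by omega, by omega⟩
        · exact ⟨α - 1, by omega, by omega, by omega, by omega, by omega⟩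
    -- the uncovered parts
    set A'' := A'.filter (fun x => x ∉ M.verts) with hA''def
    set B'' := B'.filter (fun x => x ∉ M.verts) with hB''def
    set C'' := C'.filter (fun x => x ∉ M.verts) with hC''def
    obtain ⟨N, hmN, hvN⟩ := cover_matching (G := (Hk k).induce S) A'' B'' C''
      (Finset.disjoint_of_subset_left (Finset.filter_subset _ _)
        (Finset.disjoint_of_subset_right (Finset.filter_subset _ _) hABd))
      (Finset.disjoint_of_subset_left (Finset.filter_subset _ _)
        (Finset.disjoint_of_subset_right (Finset.filter_subset _ _) hACd))
      (Finset.disjoint_of_subset_left (Finset.filter_subset _ _)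
        (Finset.disjoint_of_subset_right (Finset.filter_subset _ _) hBCd))
      (fun x hx y hy => by
        rw [hadjG]
        refine HkProof.hk_adj_of_pt_ne_zero ?_ ?_
        · exact (Finset.mem_filter.mp (Finset.mem_filter.mp hx).1).2
        · have := (Finset.mem_filter.mp (Finset.mem_filter.mp hy).1).2
          omega)
      (fun x hx y hy => by
        rw [hadjG]
        refine HkProof.hk_adj_of_pt_ne_zero ?_ ?_
        · exact (Finset.mem_filter.mp (Finset.mem_filter.mp hx).1).2
        · have := (Finset.mem_filter.mp (Finset.mem_filter.mp hy).1).2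
          omega)
      (fun x hx y hy hne => by
        rw [hadjG]
        exact HkProof.hk_adj_of_pt_one
          (Finset.mem_filter.mp (Finset.mem_filter.mp hx).1).2
          (Finset.mem_filter.mp (Finset.mem_filter.mp hy).1).2
          (fun h => hne (Subtype.coe_injective h)))
      (fun x hx y hy hne => by
        rw [hadjG]
        exact HkProof.hk_adj_of_pt_two
          (Finset.mem_filter.mp (Finset.mem_filter.mp hx).1).2
          (Finset.mem_filter.mp (Finset.mem_filter.mp hy).1).2
          (fun h => hne (Subtype.coe_injective h)))
      xx (α - xx) (by omega) (by omega) (by omega)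
      (Nat.even_iff.mpr (by omega)) (Nat.even_iff.mpr (by omega))
    -- the combined perfect matching
    have hdisj : Disjoint M.support N.support := by
      rw [hM.support_eq_verts, hmN.support_eq_verts, hvN]
      rw [Set.disjoint_union_right, Set.disjoint_union_right]
      refine ⟨⟨?_, ?_⟩, ?_⟩ <;>
      · rw [Set.disjoint_right]
        intro z hz
        rw [Finset.mem_coe, Finset.mem_filter] at hz
        exact hz.2
    refine ⟨M ⊔ N, le_sup_left, hM.sup hmN hdisj, ?_⟩
    intro z
    show z ∈ M.verts ∪ N.verts
    by_cases hz : z ∈ M.verts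
    · exact Or.inl hz
    · refine Or.inr ?_
      rw [hvN]
      have h3 := HkProof.pt_lt3 (↑z : HkV k)
      have : HkProof.pt (↑z : HkV k) = 0 ∨ HkProof.pt (↑z : HkV k) = 1
          ∨ HkProof.pt (↑z : HkV k) = 2 := by omega
      rcases this with h | h | h
      · exact Or.inl (Or.inl (by
          rw [Finset.mem_coe, hA''def, Finset.mem_filter, hA'def, Finset.mem_filter]
          exact ⟨⟨Finset.mem_univ _, h⟩, hz⟩))
      · exact Or.inl (Or.inr (by
          rw [Finset.mem_coe, hB''def, Finset.mem_filter, hB'def, Finset.mem_filter]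
          exact ⟨⟨Finset.mem_univ _, h⟩, hz⟩))
      · exact Or.inr (by
          rw [Finset.mem_coe, hC''def, Finset.mem_filter, hC'def, Finset.mem_filter]
          exact ⟨⟨Finset.mem_univ _, h⟩, hz⟩)
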